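/- Let (A,d,⟨·,·⟩) be a cyclic cochain complex and H ⊆ A a harmonic subspace. Then: (1) the restriction of the pairing to H is perfect, so H is a cyclic subcomplex; (2) the inclusion H ↪ A is a quasi-isomorphism; (3) A = H ⊕ H^⊥, so there is a unique symmetric projection π_H : A → A with image H and kernel H^⊥; and (4) π_H is a harmonic projection (in particular im d ⊆ ker π_H, so d∘π_H = π_H∘d = 0). -/

import Mathlib

noncomputable section

/-- A cochain complex over `ℝ` (with a `ℤ`-grading realized as an internal direct sum
of submodules) together with a graded-symmetric pairing of degree `n` compatible with
the differential. -/
structure PairedComplex (A : Type*) [AddCommGroup A] [Module ℝ A] where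
  /-- the grading `A = ⊕ᵢ Aⁱ` -/
  grading : ℤ → Submodule ℝ A
  internal : DirectSum.IsInternal grading
  /-- the differential -/
  d : A →ₗ[ℝ] A
  d_degree : ∀ i : ℤ, ∀ x ∈ grading i, d x ∈ grading (i + 1)
  d_sq : ∀ x : A, d (d x) = 0
  /-- the degree of the pairing -/
  n : ℤ
  /-- the pairing -/
  pair : A →ₗ[ℝ] A →ₗ[ℝ] ℝ
  pair_degree : ∀ i j : ℤ, i + j ≠ n → ∀ x ∈ grading i, ∀ y ∈ grading j, pair x y = 0
  pair_symm : ∀ i j : ℤ, ∀ x ∈ grading i, ∀ y ∈ grading j,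
      pair x y = (-1 : ℝ) ^ (i * j) * pair y x
  pair_d : ∀ i : ℤ, ∀ x ∈ grading i, ∀ y : A,
      pair (d x) y = (-1 : ℝ) ^ (1 + i) * pair x (d y)

namespace PairedComplex

variable {A : Type*} [AddCommGroup A] [Module ℝ A] (X : PairedComplex A)

/-- `f` is homogeneous of degree `k`. -/
def IsDegree (f : A →ₗ[ℝ] A) (k : ℤ) : Prop :=
  ∀ i : ℤ, ∀ x ∈ X.grading i, f x ∈ X.grading (i + k)

/-- A chain map: a degree `0` map commuting with the differential. -/
def IsChainMap (f : A →ₗ[ℝ] A) : Prop :=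
  X.IsDegree f 0 ∧ ∀ x : A, f (X.d x) = X.d (f x)

/-- A projection: an idempotent chain map. -/
def IsProjection (p : A →ₗ[ℝ] A) : Prop :=
  X.IsChainMap p ∧ ∀ x : A, p (p x) = p x

/-- The projection `π_P = id + d∘P + P∘d` associated to a homotopy operator `P`. -/
def assocProj (P : A →ₗ[ℝ] A) : A →ₗ[ℝ] A :=
  LinearMap.id + X.d ∘ₗ P + P ∘ₗ X.d

/-- A homotopy operator: a degree `-1` map such that `−d∘P − P∘d` is a projection. -/
def IsHomotopyOperator (P : A →ₗ[ℝ] A) : Prop :=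
  X.IsDegree P (-1) ∧ X.IsProjection (-(X.d ∘ₗ P) - P ∘ₗ X.d)

/-- A homotopy operator `P` is special if `P∘P = 0` and `P∘d∘P = −P`. -/
def IsSpecial (P : A →ₗ[ℝ] A) : Prop :=
  (∀ x : A, P (P x) = 0) ∧ ∀ x : A, P (X.d (P x)) = -(P x)

/-- The symmetry property `⟨Px,y⟩ = (−1)^{deg x} ⟨x,Py⟩` of a propagator. -/
def IsSymmetricDeg (P : A →ₗ[ℝ] A) : Prop :=
  ∀ i : ℤ, ∀ x ∈ X.grading i, ∀ y : A,
    X.pair (P x) y = (-1 : ℝ) ^ i * X.pair x (P y)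

/-- A propagator: a homotopy operator satisfying the symmetry property. -/
def IsPropagator (P : A →ₗ[ℝ] A) : Prop :=
  X.IsHomotopyOperator P ∧ X.IsSymmetricDeg P

/-- A symmetric operator: `⟨px,y⟩ = ⟨x,py⟩`. -/
def IsSymmetric (p : A →ₗ[ℝ] A) : Prop :=
  ∀ x y : A, X.pair (p x) y = X.pair x (p y)

/-- Nondegeneracy of the pairing. -/
def Nondegenerate : Prop :=
  ∀ x : A, (∀ y : A, X.pair x y = 0) → x = 0

/-- The pairing is perfect: the musical map `x ↦ ⟨x,·⟩` is an isomorphism onto the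
graded dual, i.e. it is injective and every linear functional on `A^{n-i}` is
represented by an element of `A^i`. -/
def Perfect : Prop :=
  X.Nondegenerate ∧
    ∀ i : ℤ, ∀ φ : ↥(X.grading (X.n - i)) →ₗ[ℝ] ℝ,
      ∃ x ∈ X.grading i, ∀ y : ↥(X.grading (X.n - i)), X.pair x (y : A) = φ y

/-- A chain map induces an isomorphism on cohomology (elementwise formulation). -/
def IsQuasiIso (f : A →ₗ[ℝ] A) : Prop :=
  (∀ x : A, X.d x = 0 → ∃ y : A, X.d y = 0 ∧ ∃ z : A, f y - x = X.d z) ∧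
  (∀ y : A, X.d y = 0 → (∃ z : A, f y = X.d z) → ∃ w : A, y = X.d w)

/-- A graded subspace: spanned by its homogeneous elements. -/
def IsGradedSubspace (B : Submodule ℝ A) : Prop :=
  ∀ x ∈ B, x ∈ ⨆ i : ℤ, B ⊓ X.grading i

/-- A subcomplex: a graded subspace preserved by the differential. -/
def IsSubcomplex (B : Submodule ℝ A) : Prop :=
  X.IsGradedSubspace B ∧ ∀ x ∈ B, X.d x ∈ B

/-- The inclusion `B ↪ A` is a quasi-isomorphism (elementwise formulation). -/
def InclQuasiIso (B : Submodule ℝ A) : Prop :=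
  (∀ x : A, X.d x = 0 → ∃ b ∈ B, X.d b = 0 ∧ ∃ z : A, x - b = X.d z) ∧
  (∀ b ∈ B, X.d b = 0 → (∃ z : A, b = X.d z) → ∃ c ∈ B, b = X.d c)

/-- The restriction of the pairing to `B` is perfect. -/
def SubPerfect (B : Submodule ℝ A) : Prop :=
  (∀ x ∈ B, (∀ y ∈ B, X.pair x y = 0) → x = 0) ∧
    ∀ i : ℤ, ∀ φ : ↥(B ⊓ X.grading (X.n - i)) →ₗ[ℝ] ℝ,
      ∃ x ∈ B ⊓ X.grading i, ∀ y : ↥(B ⊓ X.grading (X.n - i)), X.pair x (y : A) = φ y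

/-- The orthogonal complement `B^⊥ = {x | ⟨x,b⟩ = 0 ∀ b ∈ B}`. -/
def perp (B : Submodule ℝ A) : Submodule ℝ A where
  carrier := {x : A | ∀ b ∈ B, X.pair x b = 0}
  add_mem' := by
    intro x y hx hy
    intro b hb
    have hx' := hx b hb
    have hy' := hy b hb
    simp only [map_add, LinearMap.add_apply, hx', hy', add_zero]
  zero_mem' := by
    intro b hb
    simp
  smul_mem' := by
    intro c x hx b hb
    have hx' := hx b hb
    simp only [map_smul, LinearMap.smul_apply, hx', smul_zero]

/-- A harmonic subspace: a graded subspace `H` with `ker d = H ⊕ im d`. -/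
def IsHarmonic (H : Submodule ℝ A) : Prop :=
  X.IsGradedSubspace H ∧ H ≤ LinearMap.ker X.d ∧
    H ⊓ LinearMap.range X.d = ⊥ ∧ H ⊔ LinearMap.range X.d = LinearMap.ker X.d

/-- A Hodge decomposition `B = H ⊕ d(B) ⊕ C` of a subcomplex `B ⊆ A` (with respect to
the restricted pairing); taking `B = ⊤` gives a Hodge decomposition of `A`. -/
def IsHodgeOn (B H C : Submodule ℝ A) : Prop :=
  H ≤ B ∧ C ≤ B ∧ X.IsGradedSubspace H ∧ X.IsGradedSubspace C ∧
  H ≤ LinearMap.ker X.d ∧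
  H ⊓ Submodule.map X.d B = ⊥ ∧
  H ⊔ Submodule.map X.d B = LinearMap.ker X.d ⊓ B ∧
  C ⊓ LinearMap.ker X.d = ⊥ ∧
  C ⊔ (LinearMap.ker X.d ⊓ B) = B ∧
  (∀ c ∈ C, ∀ c' ∈ C, X.pair c c' = 0) ∧
  (∀ c ∈ C, ∀ h ∈ H, X.pair c h = 0)

/-- A Hodge decomposition `A = H ⊕ im d ⊕ C` of the full complex. -/
def IsHodge (H C : Submodule ℝ A) : Prop :=
  X.IsHodgeOn ⊤ H C

/-- `A` is of Hodge type if it admits a Hodge decomposition. -/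
def IsHodgeType : Prop :=
  ∃ H C : Submodule ℝ A, X.IsHodge H C

/-- The operator `P_{H,C}` canonically associated to a Hodge decomposition `(H,C)`:
`P(dy) = −y` for `y ∈ C`, and `P = 0` on `H ⊕ C`. -/
def IsHodgeOperator (H C : Submodule ℝ A) (P : A →ₗ[ℝ] A) : Prop :=
  (∀ y ∈ C, P (X.d y) = -y) ∧ (∀ x ∈ H, P x = 0) ∧ ∀ x ∈ C, P x = 0

/-- The degenerate subspace `A_deg = {a | ⟨a,x⟩ = 0 ∀ x}`. -/
def degSub : Submodule ℝ A := X.perp ⊤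

/-- The induced pairing on cohomology is nondegenerate (elementwise formulation). -/
def CohomNondeg : Prop :=
  ∀ x : A, X.d x = 0 → (∀ y : A, X.d y = 0 → X.pair x y = 0) → ∃ z : A, x = X.d z

/-- The induced pairing on cohomology is perfect (elementwise formulation). -/
def CohomPerfect : Prop :=
  X.CohomNondeg ∧
    ∀ i : ℤ, ∀ φ : ↥(LinearMap.ker X.d ⊓ X.grading (X.n - i)) →ₗ[ℝ] ℝ,
      (∀ y : ↥(LinearMap.ker X.d ⊓ X.grading (X.n - i)),
          (∃ z : A, (y : A) = X.d z) → φ y = 0) →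
      ∃ x ∈ LinearMap.ker X.d ⊓ X.grading i,
        ∀ y : ↥(LinearMap.ker X.d ⊓ X.grading (X.n - i)), X.pair x (y : A) = φ y

end PairedComplex

namespace PairedComplex

variable {A : Type*} [AddCommGroup A] [Module ℝ A] (X : PairedComplex A)

/-- A realization of the nondegenerate quotient `Q(A) = A / A_deg`:
a surjective chain map with kernel `A_deg` preserving pairings, gradings and degree. -/
def IsQuotientMap {B : Type*} [AddCommGroup B] [Module ℝ B]
    (Y : PairedComplex B) (q : A →ₗ[ℝ] B) : Prop :=
  Function.Surjective q ∧
  LinearMap.ker q = X.degSub ∧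
  (∀ x : A, q (X.d x) = Y.d (q x)) ∧
  (∀ x y : A, Y.pair (q x) (q y) = X.pair x y) ∧
  (∀ i : ℤ, ∀ x ∈ X.grading i, q x ∈ Y.grading i) ∧
  Y.n = X.n

/-- A Hodge star on a nonnegatively graded cochain complex with pairing of degree `n`:
a degree-reversing involution (up to sign) such that `(x,y) := ⟨x,⋆y⟩` is a positive
definite inner product. -/
def IsHodgeStar (star : A →ₗ[ℝ] A) : Prop :=
  (∀ i : ℤ, ∀ x ∈ X.grading i, star x ∈ X.grading (X.n - i)) ∧
  (∀ i : ℤ, ∀ x ∈ X.grading i, star (star x) = ((-1 : ℝ) ^ (i * (X.n - i))) • x) ∧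
  (∀ x y : A, X.pair x (star y) = X.pair y (star x)) ∧
  (∀ x : A, x ≠ 0 → 0 < X.pair x (star x))

end PairedComplex

/-- A differential graded algebra with pairing: a `PairedComplex` together with an
associative product of degree `0` satisfying the Leibniz rule and compatible with the
pairing. -/
structure PairedDGA (A : Type*) [AddCommGroup A] [Module ℝ A] extends
    PairedComplex A where
  /-- the product -/
  mul : A →ₗ[ℝ] A →ₗ[ℝ] A
  mul_degree : ∀ i j : ℤ, ∀ x ∈ grading i, ∀ y ∈ grading j, mul x y ∈ grading (i + j)
  mul_assoc' : ∀ x y z : A, mul (mul x y) z = mul x (mul y z)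
  leibniz : ∀ i : ℤ, ∀ x ∈ grading i, ∀ y : A,
      d (mul x y) = mul (d x) y + ((-1 : ℝ) ^ i) • mul x (d y)
  pair_mul : ∀ x y z : A, pair (mul x y) z = pair x (mul y z)

namespace PairedDGA

variable {A : Type*} [AddCommGroup A] [Module ℝ A] (Y : PairedDGA A)

/-- `one` is a unit for the product. -/
def IsUnit (one : A) : Prop :=
  one ≠ 0 ∧ one ∈ Y.grading 0 ∧ ∀ x : A, Y.mul one x = x ∧ Y.mul x one = x

/-- graded commutativity. -/
def IsCommutative : Prop :=
  ∀ i j : ℤ, ∀ x ∈ Y.grading i, ∀ y ∈ Y.grading j,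
    Y.mul x y = ((-1 : ℝ) ^ (i * j)) • Y.mul y x

/-- An orientation of degree `n` inducing the pairing: a chain-level functional
supported in degree `n`, vanishing on boundaries, nontrivial on cohomology,
with `⟨x,y⟩ = o(x∧y)`. -/
def IsOrientation (o : A →ₗ[ℝ] ℝ) : Prop :=
  (∀ i : ℤ, i ≠ Y.n → ∀ x ∈ Y.grading i, o x = 0) ∧
  (∀ x : A, o (Y.d x) = 0) ∧
  (∃ x : A, Y.d x = 0 ∧ o x ≠ 0) ∧
  (∀ x y : A, Y.pair x y = o (Y.mul x y))

/-- The small subalgebra `S_P`: the smallest graded dg-subalgebra containing the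
harmonic subspace `H_P = im π_P` and preserved by `P`. -/
def smallSub (P : A →ₗ[ℝ] A) : Submodule ℝ A :=
  sInf {S : Submodule ℝ A |
    LinearMap.range (Y.toPairedComplex.assocProj P) ≤ S ∧
    Y.toPairedComplex.IsGradedSubspace S ∧
    (∀ x ∈ S, Y.d x ∈ S) ∧
    (∀ x ∈ S, ∀ y ∈ S, Y.mul x y ∈ S) ∧
    (∀ x ∈ S, P x ∈ S)}

end PairedDGA

/-- Elements of `A` obtained from homogeneous elements of the harmonic subspace
`H_P = im π_P` by iterated applications of `P` and of the product. -/
inductive TreeGen {A : Type*} [AddCommGroup A] [Module ℝ A]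
    (Y : PairedDGA A) (P : A →ₗ[ℝ] A) : A → Prop
  | base : ∀ (i : ℤ) (x : A), x ∈ Y.grading i →
      x ∈ LinearMap.range (Y.toPairedComplex.assocProj P) → TreeGen Y P x
  | mul : ∀ x y : A, TreeGen Y P x → TreeGen Y P y → TreeGen Y P (Y.mul x y)
  | app : ∀ x : A, TreeGen Y P x → TreeGen Y P (P x)


section StmtThreeHelpers

variable {A : Type*} [AddCommGroup A] [Module ℝ A]

theorem stmt3FactorThru {V : Type*} [AddCommGroup V] [Module ℝ V]
    (T : V →ₗ[ℝ] A) (g : V →ₗ[ℝ] ℝ) (h : LinearMap.ker T ≤ LinearMap.ker g) :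
    ∃ Ψ : A →ₗ[ℝ] ℝ, ∀ v, Ψ (T v) = g v := by
  obtain ⟨Ψ, hΨ⟩ := LinearMap.exists_extend
    (((LinearMap.ker T).liftQ g h) ∘ₗ T.quotKerEquivRange.symm.toLinearMap)
  refine ⟨Ψ, fun v => ?_⟩
  have h1 : Ψ (T v) = (Ψ ∘ₗ (LinearMap.range T).subtype)
      ⟨T v, LinearMap.mem_range_self T v⟩ := rfl
  rw [h1, hΨ]
  simp only [LinearMap.comp_apply, LinearEquiv.coe_coe]
  rw [LinearMap.quotKerEquivRange_symm_apply_image]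
  exact Submodule.liftQ_apply _ g v

theorem stmt3ExtTwo {p q : Submodule ℝ A} (hpq : p ⊓ q = ⊥) (f : ↥p →ₗ[ℝ] ℝ) :
    ∃ F : A →ₗ[ℝ] ℝ, (∀ x : ↥p, F x = f x) ∧ (∀ x ∈ q, F x = 0) := by
  set T : (↥p × ↥q) →ₗ[ℝ] A := p.subtype.coprod q.subtype with hT
  have hker : LinearMap.ker T ≤ LinearMap.ker (f ∘ₗ LinearMap.fst ℝ ↥p ↥q) := by
    rintro ⟨a, b⟩ hab
    have h0 : (a : A) + (b : A) = 0 := by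
      have : T (a, b) = 0 := hab
      simpa [hT] using this
    have ha : (a : A) ∈ p ⊓ q := by
      refine ⟨a.2, ?_⟩
      have hneg : (a : A) = -(b : A) := by
        rw [eq_neg_iff_add_eq_zero]; exact h0
      rw [hneg]; exact q.neg_mem b.2
    rw [hpq] at ha
    have ha0 : a = 0 := Subtype.ext (by simpa using ha)
    simp [LinearMap.mem_ker, ha0]
  obtain ⟨Ψ, hΨ⟩ := stmt3FactorThru T (f ∘ₗ LinearMap.fst ℝ ↥p ↥q) hker
  refine ⟨Ψ, fun x => ?_, fun x hx => ?_⟩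
  · have := hΨ (x, 0)
    simpa [hT] using this
  · have := hΨ (0, ⟨x, hx⟩)
    simpa [hT] using this

theorem stmt3SgnNe (m : ℤ) : ((-1 : ℝ) ^ m) ≠ 0 := zpow_ne_zero m (by norm_num)

theorem stmt3SgnSq (m : ℤ) : ((-1 : ℝ) ^ m) * ((-1 : ℝ) ^ m) = 1 := by
  rw [← mul_zpow]; norm_num

namespace PairedComplex

variable (X : PairedComplex A)

theorem hInd (C : A → Prop) (h0 : C 0) (hadd : ∀ x y, C x → C y → C (x + y))
    (hgr : ∀ i : ℤ, ∀ x ∈ X.grading i, C x) (x : A) : C x := by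
  have hx : x ∈ ⨆ i, X.grading i := by
    rw [X.internal.submodule_iSup_eq_top]; trivial
  exact Submodule.iSup_induction (motive := C) _ hx hgr h0 hadd

/-- projection onto the degree `i` part -/
noncomputable def projG (i : ℤ) : A →ₗ[ℝ] A :=
  (X.grading i).subtype ∘ₗ (DirectSum.component ℝ ℤ (fun j => ↥(X.grading j)) i) ∘ₗ
    (LinearEquiv.ofBijective (DirectSum.coeLinearMap X.grading) X.internal).symm.toLinearMap

theorem projG_mem (i : ℤ) (x : A) : X.projG i x ∈ X.grading i := by
  exact ((DirectSum.component ℝ ℤ (fun j => ↥(X.grading j)) i) _).2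

theorem projG_of_mem_self {i : ℤ} {x : A} (hx : x ∈ X.grading i) : X.projG i x = x := by
  unfold projG
  simp only [LinearMap.comp_apply, LinearEquiv.coe_toLinearMap]
  rw [← DirectSum.apply_eq_component, X.internal.ofBijective_coeLinearMap_of_mem hx]
  rfl

theorem projG_of_mem_ne {i j : ℤ} {x : A} (hx : x ∈ X.grading j) (hij : i ≠ j) :
    X.projG i x = 0 := by
  unfold projG
  simp only [LinearMap.comp_apply, LinearEquiv.coe_toLinearMap]
  rw [← DirectSum.apply_eq_component,
    X.internal.ofBijective_coeLinearMap_of_mem_ne (Ne.symm hij) hx]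
  rfl

theorem eq_zero_of_projG (x : A) (h : ∀ i, X.projG i x = 0) : x = 0 := by
  set e := LinearEquiv.ofBijective (DirectSum.coeLinearMap X.grading) X.internal with he
  have h0 : e.symm x = 0 := by
    refine DFinsupp.ext fun i => ?_
    have hi := h i
    unfold projG at hi
    simp only [LinearMap.comp_apply, LinearEquiv.coe_toLinearMap] at hi
    rw [← DirectSum.apply_eq_component] at hi
    exact Subtype.ext hi
  have hx : x = e (e.symm x) := (e.apply_symm_apply x).symm
  rw [hx, h0]
  exact e.map_zero

theorem d_projG (i : ℤ) (x : A) : X.d (X.projG i x) = X.projG (i + 1) (X.d x) := by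
  refine X.hInd (fun x => X.d (X.projG i x) = X.projG (i + 1) (X.d x)) (by simp)
    (fun a b ha hb => by simp only [map_add, ha, hb]) (fun j x hx => ?_) x
  beta_reduce
  by_cases h : i = j
  · subst h
    rw [X.projG_of_mem_self hx, X.projG_of_mem_self (X.d_degree i x hx)]
  · rw [X.projG_of_mem_ne hx h, X.projG_of_mem_ne (X.d_degree j x hx) (by omega), map_zero]

theorem projG_mem_of_graded {B : Submodule ℝ A} (hB : X.IsGradedSubspace B) {x : A}
    (hx : x ∈ B) (i : ℤ) : X.projG i x ∈ B := by
  refine Submodule.iSup_induction (motive := fun x => X.projG i x ∈ B) _ (hB x hx)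
    (fun j y hy => ?_) (by simp) (fun a b ha hb => by simp only [map_add]; exact B.add_mem ha hb)
  beta_reduce
  by_cases h : i = j
  · subst h; rw [X.projG_of_mem_self hy.2]; exact hy.1
  · rw [X.projG_of_mem_ne hy.2 h]; exact B.zero_mem

theorem pair_projG_right {i : ℤ} {x : A} (hx : x ∈ X.grading i) (y : A) :
    X.pair x y = X.pair x (X.projG (X.n - i) y) := by
  refine X.hInd (fun y => X.pair x y = X.pair x (X.projG (X.n - i) y)) (by simp)
    (fun a b ha hb => by simp only [map_add, ha, hb]) (fun j y hy => ?_) y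
  beta_reduce
  by_cases h : X.n - i = j
  · rw [X.projG_of_mem_self (h ▸ hy)]
  · rw [X.projG_of_mem_ne hy h, map_zero, X.pair_degree i j (by omega) x hx y hy]

theorem pair_projG_left {m : ℤ} {u : A} (hu : u ∈ X.grading m) (x : A) :
    X.pair x u = X.pair (X.projG (X.n - m) x) u := by
  refine X.hInd (fun x => X.pair x u = X.pair (X.projG (X.n - m) x) u) (by simp)
    (fun a b ha hb => by
      simp only [map_add, LinearMap.add_apply] at *
      rw [ha, hb]) (fun i x hx => ?_) x
  beta_reduce
  by_cases h : X.n - m = i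
  · rw [X.projG_of_mem_self (h ▸ hx)]
  · rw [X.projG_of_mem_ne hx h, X.pair_degree i m (by omega) x hx u hu]
    simp

theorem pair_swap {j : ℤ} {y : A} (hy : y ∈ X.grading j) (x : A) :
    X.pair y x = (-1 : ℝ) ^ (j * (X.n - j)) * X.pair x y := by
  refine X.hInd (fun x => X.pair y x = (-1 : ℝ) ^ (j * (X.n - j)) * X.pair x y) (by simp)
    (fun a b ha hb => by
      simp only [map_add, LinearMap.add_apply] at *
      rw [ha, hb]; ring) (fun i x hx => ?_) x
  beta_reduce
  by_cases h : i + j = X.n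
  · have hi : i = X.n - j := by omega
    subst hi
    rw [X.pair_symm j (X.n - j) y hy x hx]
  · rw [X.pair_degree j i (by omega) y hy x hx, X.pair_degree i j (by omega) x hx y hy]
    simp

theorem pair_d_closed (z y : A) (hy : X.d y = 0) : X.pair (X.d z) y = 0 := by
  refine X.hInd (fun z => X.pair (X.d z) y = 0) (by simp)
    (fun a b ha hb => by
      simp only [map_add, LinearMap.add_apply] at *
      rw [ha, hb]; ring) (fun m z hz => ?_) z
  beta_reduce
  rw [X.pair_d m z hz y, hy]
  simp

theorem pair_graded_closed_d {B : Submodule ℝ A} (hB : X.IsGradedSubspace B)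
    (hBk : B ≤ LinearMap.ker X.d) {u : A} (hu : u ∈ B) (z : A) :
    X.pair u (X.d z) = 0 := by
  refine Submodule.iSup_induction (motive := fun u => X.pair u (X.d z) = 0) _ (hB u hu)
    (fun i v hv => ?_) (by simp) (fun a b ha hb => by
      simp only [map_add, LinearMap.add_apply] at *
      rw [ha, hb]; ring)
  have hdv : X.d v = 0 := LinearMap.mem_ker.1 (hBk hv.1)
  have := X.pair_d i v hv.2 z
  rw [hdv] at this
  simp only [map_zero, LinearMap.zero_apply] at this
  rcases mul_eq_zero.1 this.symm with h | h
  · exact absurd h (stmt3SgnNe _)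
  · exact h

theorem mem_perp_iff {B : Submodule ℝ A} {x : A} :
    x ∈ X.perp B ↔ ∀ b ∈ B, X.pair x b = 0 := Iff.rfl

end PairedComplex

end StmtThreeHelpers
section StmtThreeMain

namespace PairedComplex

variable {A : Type*} [AddCommGroup A] [Module ℝ A] (X : PairedComplex A)

theorem exact_of_pair_ker (hperf : X.Perfect) {i : ℤ} {x : A} (hx : x ∈ X.grading i)
    (h : ∀ k : A, X.d k = 0 → X.pair x k = 0) : ∃ w, x = X.d w := by
  obtain ⟨Ψ, hΨ⟩ := stmt3FactorThru X.d (X.pair x)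
    (fun v hv => by
      have hv' : X.d v = 0 := hv
      simpa using h v hv')
  obtain ⟨w₀, hw₀g, hw₀⟩ := hperf.2 (i - 1) (Ψ ∘ₗ (X.grading (X.n - (i - 1))).subtype)
  have key : ∀ z, X.pair (X.d w₀) z = (-1 : ℝ) ^ i * X.pair x z := by
    refine X.hInd (fun z => X.pair (X.d w₀) z = (-1 : ℝ) ^ i * X.pair x z) (by simp)
      (fun a b ha hb => by
        simp only [map_add] at *
        rw [ha, hb]; ring) (fun j z hz => ?_)
    beta_reduce
    have hpd := X.pair_d (i - 1) w₀ hw₀g z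
    have hexp : (1 : ℤ) + (i - 1) = i := by ring
    rw [hexp] at hpd
    by_cases hj : j = X.n - i
    · have hdz : X.d z ∈ X.grading (X.n - (i - 1)) := by
        have hmem := X.d_degree j z hz
        have hje : j + 1 = X.n - (i - 1) := by omega
        rwa [hje] at hmem
      have hw := hw₀ ⟨X.d z, hdz⟩
      simp only [LinearMap.comp_apply, Submodule.coe_subtype] at hw
      rw [hpd, hw, hΨ z]
    · rw [hpd, X.pair_degree (i - 1) (j + 1) (by omega) w₀ hw₀g (X.d z) (X.d_degree j z hz),
        X.pair_degree i j (by omega) x hx z hz]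
  refine ⟨(-1 : ℝ) ^ i • w₀, ?_⟩
  have hz : ∀ z, X.pair (x - X.d ((-1 : ℝ) ^ i • w₀)) z = 0 := by
    intro z
    simp only [map_sub, map_smul, LinearMap.sub_apply, LinearMap.smul_apply, smul_eq_mul]
    rw [key z, ← mul_assoc, stmt3SgnSq]
    all_goals ring
  exact sub_eq_zero.1 (hperf.1 _ hz)

theorem harm_pair_ker {H : Submodule ℝ A} (hH : X.IsHarmonic H) {h : A} (hh : h ∈ H)
    (hp : ∀ b ∈ H, X.pair h b = 0) : ∀ k : A, X.d k = 0 → X.pair h k = 0 := by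
  intro k hk
  have hmem : k ∈ H ⊔ LinearMap.range X.d := by
    rw [hH.2.2.2]; exact LinearMap.mem_ker.2 hk
  obtain ⟨b, hb, r, hr, rfl⟩ := Submodule.mem_sup.1 hmem
  obtain ⟨z, rfl⟩ := hr
  rw [map_add, hp b hb, X.pair_graded_closed_d hH.1 hH.2.1 hh z, add_zero]

theorem harm_nondeg {H : Submodule ℝ A} (hperf : X.Perfect) (hH : X.IsHarmonic H) {h : A}
    (hh : h ∈ H) (hp : ∀ b ∈ H, X.pair h b = 0) : h = 0 := by
  have hk := X.harm_pair_ker hH hh hp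
  refine X.eq_zero_of_projG h fun i => ?_
  have hmemH : X.projG i h ∈ H := X.projG_mem_of_graded hH.1 hh i
  have hg : X.projG i h ∈ X.grading i := X.projG_mem i h
  have hpair : ∀ k, X.d k = 0 → X.pair (X.projG i h) k = 0 := by
    intro k hkk
    rw [X.pair_projG_right hg k]
    have hnn : X.n - (X.n - i) = i := by ring
    have h1 := X.pair_projG_left (X.projG_mem (X.n - i) k) h
    rw [hnn] at h1
    rw [← h1]
    apply hk
    rw [X.d_projG, hkk, map_zero]
  obtain ⟨w, hw⟩ := X.exact_of_pair_ker hperf hg hpair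
  have hmem : X.projG i h ∈ H ⊓ LinearMap.range X.d := ⟨hmemH, ⟨w, hw.symm⟩⟩
  rw [hH.2.2.1] at hmem
  simpa using hmem

theorem sub_rep {H : Submodule ℝ A} (hperf : X.Perfect) (hH : X.IsHarmonic H) (i : ℤ)
    (φ : ↥(H ⊓ X.grading (X.n - i)) →ₗ[ℝ] ℝ) :
    ∃ x ∈ H ⊓ X.grading i, ∀ y : ↥(H ⊓ X.grading (X.n - i)), X.pair x (y : A) = φ y := by
  have hdisj : (H ⊓ X.grading (X.n - i)) ⊓ LinearMap.range X.d = ⊥ := by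
    rw [eq_bot_iff]
    intro a ha
    have hmem : a ∈ H ⊓ LinearMap.range X.d := ⟨ha.1.1, ha.2⟩
    rw [hH.2.2.1] at hmem; exact hmem
  obtain ⟨Φ, hΦ1, hΦ2⟩ := stmt3ExtTwo hdisj φ
  obtain ⟨x, hxg, hx⟩ := hperf.2 i (Φ ∘ₗ (X.grading (X.n - i)).subtype)
  have hdz : ∀ z, X.pair x (X.d z) = 0 := by
    refine X.hInd (fun z => X.pair x (X.d z) = 0) (by simp)
      (fun a b ha hb => by simp only [map_add] at *; rw [ha, hb]; ring) (fun j z hz => ?_)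
    beta_reduce
    by_cases hj : j + 1 = X.n - i
    · have hmem : X.d z ∈ X.grading (X.n - i) := hj ▸ X.d_degree j z hz
      have hxx := hx ⟨X.d z, hmem⟩
      simp only [LinearMap.comp_apply, Submodule.coe_subtype] at hxx
      rw [hxx]
      exact hΦ2 _ ⟨z, rfl⟩
    · exact X.pair_degree i (j + 1) (by omega) x hxg _ (X.d_degree j z hz)
  have hdx : X.d x = 0 := by
    apply hperf.1
    intro z
    rw [X.pair_d i x hxg z, hdz z, mul_zero]
  have hxk : x ∈ H ⊔ LinearMap.range X.d := by
    rw [hH.2.2.2]; exact LinearMap.mem_ker.2 hdx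
  obtain ⟨b, hb, r, hr, hsum⟩ := Submodule.mem_sup.1 hxk
  have hxproj : x = X.projG i b + X.projG i r := by
    have h2 : X.projG i b + X.projG i r = X.projG i x := by rw [← map_add, hsum]
    rw [X.projG_of_mem_self hxg] at h2
    exact h2.symm
  obtain ⟨u, hu⟩ := hr
  have hprmem : X.projG i r ∈ LinearMap.range X.d := by
    refine ⟨X.projG (i - 1) u, ?_⟩
    rw [X.d_projG (i - 1) u, show i - 1 + 1 = i by ring, hu]
  refine ⟨X.projG i b, ⟨X.projG_mem_of_graded hH.1 hb i, X.projG_mem i b⟩, fun y => ?_⟩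
  have hy1 : (y : A) ∈ H := y.2.1
  have hy2 : (y : A) ∈ X.grading (X.n - i) := y.2.2
  obtain ⟨v, hv⟩ := hprmem
  have hrz : X.pair (X.projG i r) (y : A) = 0 := by
    rw [← hv]
    exact X.pair_d_closed v _ (LinearMap.mem_ker.1 (hH.2.1 hy1))
  have hxy : X.pair x (y : A) = φ y := by
    have hxx := hx ⟨(y : A), hy2⟩
    simp only [LinearMap.comp_apply, Submodule.coe_subtype] at hxx
    rw [hxx]
    exact hΦ1 y
  have hfin : X.pair (X.projG i b) (y : A)
      = X.pair x (y : A) - X.pair (X.projG i r) (y : A) := by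
    rw [hxproj]
    simp only [map_add, LinearMap.add_apply]
    ring
  rw [hfin, hxy, hrz, sub_zero]

theorem homog_decomp {H : Submodule ℝ A} (hperf : X.Perfect) (hH : X.IsHarmonic H) {i : ℤ}
    {a : A} (ha : a ∈ X.grading i) : ∃ h ∈ H ⊓ X.grading i, a - h ∈ X.perp H := by
  obtain ⟨h, hh, hrep⟩ := X.sub_rep hperf hH i ((X.pair a) ∘ₗ (H ⊓ X.grading (X.n - i)).subtype)
  refine ⟨h, hh, ?_⟩
  rw [X.mem_perp_iff]
  intro b hb
  refine Submodule.iSup_induction (motive := fun b => X.pair (a - h) b = 0) _ (hH.1 b hb)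
    (fun j c hc => ?_) (by simp)
    (fun u v hu hv => by simp only [map_add] at *; rw [hu, hv]; ring)
  beta_reduce
  by_cases hj : j = X.n - i
  · have hcm : c ∈ H ⊓ X.grading (X.n - i) := ⟨hc.1, hj ▸ hc.2⟩
    have hrc := hrep ⟨c, hcm⟩
    simp only [LinearMap.comp_apply, Submodule.coe_subtype] at hrc
    simp only [map_sub, LinearMap.sub_apply]
    rw [hrc]
    ring
  · simp only [map_sub, LinearMap.sub_apply]
    rw [X.pair_degree i j (by omega) a ha c hc.2,
      X.pair_degree i j (by omega) h hh.2 c hc.2]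
    ring

theorem perp_inf {H : Submodule ℝ A} (hperf : X.Perfect) (hH : X.IsHarmonic H) :
    H ⊓ X.perp H = ⊥ := by
  rw [eq_bot_iff]
  rintro x ⟨hx1, hx2⟩
  exact X.harm_nondeg hperf hH hx1 (X.mem_perp_iff.1 hx2)

theorem sup_perp {H : Submodule ℝ A} (hperf : X.Perfect) (hH : X.IsHarmonic H) :
    H ⊔ X.perp H = ⊤ := by
  rw [eq_top_iff]
  intro a _
  refine X.hInd (fun a => a ∈ H ⊔ X.perp H) (zero_mem _)
    (fun u v hu hv => add_mem hu hv) (fun i a ha => ?_) a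
  obtain ⟨h, hh, hph⟩ := X.homog_decomp hperf hH ha
  exact Submodule.mem_sup.2 ⟨h, hh.1, a - h, hph, by abel⟩

theorem range_d_le_perp {H : Submodule ℝ A} (hH : X.IsHarmonic H) :
    LinearMap.range X.d ≤ X.perp H := by
  rintro _ ⟨z, rfl⟩
  rw [X.mem_perp_iff]
  intro b hb
  exact X.pair_d_closed z b (LinearMap.mem_ker.1 (hH.2.1 hb))

theorem pair_graded_perp {H : Submodule ℝ A} (hH : X.IsHarmonic H) {u c : A} (hu : u ∈ H)
    (hc : c ∈ X.perp H) : X.pair u c = 0 := by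
  refine Submodule.iSup_induction (motive := fun u => X.pair u c = 0) _ (hH.1 u hu)
    (fun j v hv => ?_) (by simp)
    (fun a b ha hb => by simp only [map_add, LinearMap.add_apply] at *; rw [ha, hb]; ring)
  beta_reduce
  rw [X.pair_swap hv.2 c, X.mem_perp_iff.1 hc v hv.1, mul_zero]

end PairedComplex

end StmtThreeMain
section Statements

variable {A B : Type*} [AddCommGroup A] [Module ℝ A] [AddCommGroup B] [Module ℝ B]
/-- harmonic subspaces of a cyclic cochain complex are quasi-isomorphic
cyclic subcomplexes and admit a unique symmetric projection, which is harmonic. -/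
theorem stmt3 (X : PairedComplex A) (hperf : X.Perfect)
    (H : Submodule ℝ A) (hH : X.IsHarmonic H) :
    (X.IsSubcomplex H ∧ X.SubPerfect H) ∧
    X.InclQuasiIso H ∧
    (H ⊓ X.perp H = ⊥ ∧ H ⊔ X.perp H = ⊤) ∧
    (∃! π : A →ₗ[ℝ] A, X.IsProjection π ∧ X.IsSymmetric π ∧
        LinearMap.range π = H ∧ LinearMap.ker π = X.perp H) ∧
    (∀ π : A →ₗ[ℝ] A, X.IsProjection π → X.IsSymmetric π →
        LinearMap.range π = H → LinearMap.ker π = X.perp H →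
        LinearMap.range X.d ≤ LinearMap.ker π ∧ ∀ x : A, π (X.d x) = 0 ∧ X.d (π x) = 0) := by
  have hdisj : H ⊓ X.perp H = ⊥ := X.perp_inf hperf hH
  have hsupp : H ⊔ X.perp H = ⊤ := X.sup_perp hperf hH
  have hcompl : IsCompl H (X.perp H) :=
    ⟨disjoint_iff.2 hdisj, codisjoint_iff.2 hsupp⟩
  set π : A →ₗ[ℝ] A := H.subtype ∘ₗ (Submodule.linearProjOfIsCompl H (X.perp H) hcompl)
    with hπdef
  have hπ_mem : ∀ a : A, π a ∈ H := fun a =>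
    (Submodule.linearProjOfIsCompl H (X.perp H) hcompl a).2
  have hπ_left : ∀ a ∈ H, π a = a := fun a ha =>
    congrArg H.subtype (Submodule.linearProjOfIsCompl_apply_left hcompl ⟨a, ha⟩)
  have hπ_right : ∀ a ∈ X.perp H, π a = 0 := fun a ha => by
    simp [hπdef]
    exact Submodule.linearProjOfIsCompl_apply_right' hcompl ha
  have hker : LinearMap.ker π = X.perp H := by
    ext a
    simp only [LinearMap.mem_ker]
    constructor
    · intro h0
      have h1 : Submodule.linearProjOfIsCompl H (X.perp H) hcompl a = 0 :=
        Subtype.ext (by simpa [hπdef] using h0)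
      exact (Submodule.linearProjOfIsCompl_apply_eq_zero_iff hcompl).1 h1
    · exact hπ_right a
  have hrange : LinearMap.range π = H := le_antisymm
    (by rintro _ ⟨a, rfl⟩; exact hπ_mem a)
    (fun a ha => ⟨a, hπ_left a ha⟩)
  have hidem : ∀ a, π (π a) = π a := fun a => hπ_left _ (hπ_mem a)
  have hsubker : ∀ a : A, a - π a ∈ X.perp H := fun a => by
    rw [← hker]
    simp only [LinearMap.mem_ker, map_sub, hidem, sub_self]
  have hdeg : X.IsDegree π 0 := by
    intro i a ha
    obtain ⟨h, hh, hph⟩ := X.homog_decomp hperf hH ha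
    have hπa : π a = h := by
      have hsplit : a = h + (a - h) := by abel
      rw [hsplit, map_add, hπ_left h hh.1, hπ_right _ hph, add_zero]
    rw [hπa, add_zero]
    exact hh.2
  have hdcomm : ∀ a, π (X.d a) = X.d (π a) := fun a => by
    rw [hπ_right _ (X.range_d_le_perp hH ⟨a, rfl⟩)]
    exact (LinearMap.mem_ker.1 (hH.2.1 (hπ_mem a))).symm
  have hsym : X.IsSymmetric π := by
    intro x y
    have e1 : X.pair (π x) y = X.pair (π x) (π y) := by
      conv_lhs => rw [show y = π y + (y - π y) by abel]
      rw [map_add, X.pair_graded_perp hH (hπ_mem x) (hsubker y), add_zero]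
    have e2 : X.pair x (π y) = X.pair (π x) (π y) := by
      conv_lhs => rw [show x = π x + (x - π x) by abel]
      rw [map_add, LinearMap.add_apply,
        X.mem_perp_iff.1 (hsubker x) (π y) (hπ_mem y), add_zero]
    rw [e1, e2]
  have hproj : X.IsProjection π := ⟨⟨hdeg, hdcomm⟩, hidem⟩
  refine ⟨⟨⟨hH.1, fun x hx => ?_⟩,
      ⟨fun x hx hp => X.harm_nondeg hperf hH hx hp, fun i φ => X.sub_rep hperf hH i φ⟩⟩,
    ⟨?_, ?_⟩, ⟨hdisj, hsupp⟩,
    ⟨π, ⟨hproj, hsym, hrange, hker⟩, ?_⟩, ?_⟩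
  · -- d preserves H
    have hx0 : X.d x = 0 := LinearMap.mem_ker.1 (hH.2.1 hx)
    rw [hx0]
    exact H.zero_mem
  · -- surjectivity on cohomology
    intro x hx
    have hmem : x ∈ H ⊔ LinearMap.range X.d := by
      rw [hH.2.2.2]; exact LinearMap.mem_ker.2 hx
    obtain ⟨b, hb, r, hr, hsum⟩ := Submodule.mem_sup.1 hmem
    obtain ⟨z, rfl⟩ := hr
    exact ⟨b, hb, LinearMap.mem_ker.1 (hH.2.1 hb), z, by rw [← hsum]; abel⟩
  · -- injectivity on cohomology
    rintro b hb _ ⟨z, hz⟩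
    have hmem : b ∈ H ⊓ LinearMap.range X.d := ⟨hb, ⟨z, hz.symm⟩⟩
    rw [hH.2.2.1] at hmem
    have hb0 : b = 0 := by simpa using hmem
    exact ⟨0, H.zero_mem, by rw [hb0, map_zero]⟩
  · -- uniqueness
    rintro π' ⟨hproj', _, hrange', hker'⟩
    refine LinearMap.ext fun a => ?_
    have h1 : π' (a - π a) = 0 := by
      have : a - π a ∈ LinearMap.ker π' := by rw [hker']; exact hsubker a
      exact LinearMap.mem_ker.1 this
    have h2 : π' (π a) = π a := by
      have : π a ∈ LinearMap.range π' := by rw [hrange']; exact hπ_mem a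
      obtain ⟨u, hu⟩ := this
      rw [← hu, hproj'.2]
    calc π' a = π' (π a + (a - π a)) := by rw [show π a + (a - π a) = a by abel]
    _ = π' (π a) + π' (a - π a) := by rw [map_add]
    _ = π a := by rw [h1, h2, add_zero]
  · -- harmonicity of any such projection
    intro π' hproj' _ hrange' hker'
    have hrd : LinearMap.range X.d ≤ LinearMap.ker π' := by
      rw [hker']; exact X.range_d_le_perp hH
    refine ⟨hrd, fun x => ⟨?_, ?_⟩⟩
    · exact LinearMap.mem_ker.1 (hrd ⟨x, rfl⟩)
    · have : π' x ∈ H := hrange' ▸ ⟨x, rfl⟩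
      exact LinearMap.mem_ker.1 (hH.2.1 this)

end Statements
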